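/- The function G : [x_{ph}, ∞) → ℝ has exactly one zero x_{ms} in (x_{ph}, ∞); moreover G(x) < 0 for x_{ph} ≤ x < x_{ms} and G(x) > 0 for x > x_{ms}. -/

import Mathlib

open Real Filter Topology Set

noncomputable section

/-- `h(x) = x(x−3) + 2α²(1−β²) + 2αβ√(x − α²(1−β²))`. -/
def hfun (α β x : ℝ) : ℝ :=
  x * (x - 3) + 2 * α ^ 2 * (1 - β ^ 2) + 2 * α * β * Real.sqrt (x - α ^ 2 * (1 - β ^ 2))

/-- `G(x) = x·Δ̄(x) − [h(x) − x(x−1)]²`, with `Δ̄(x) = x² − 2x + α²`. -/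
def Gfun (α β x : ℝ) : ℝ :=
  x * (x ^ 2 - 2 * x + α ^ 2) - (hfun α β x - x * (x - 1)) ^ 2

/-- The effective potential `w_{α,β,λ}(x) = αβλ/x² + √(Δ̄(x)(1 + λ²/x²))`. -/
def wfun (α β lam x : ℝ) : ℝ :=
  α * β * lam / x ^ 2 + Real.sqrt ((x ^ 2 - 2 * x + α ^ 2) * (1 + lam ^ 2 / x ^ 2))

/-- `λ_{sph}(x) = x(√(x − α²(1−β²)) − αβ)/√(h(x))`. -/
def lamsph (α β x : ℝ) : ℝ :=
  x * (Real.sqrt (x - α ^ 2 * (1 - β ^ 2)) - α * β) / Real.sqrt (hfun α β x)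

/-- `ε_{sph}(x) = (x² − 2x + α²(1−β²) + αβ√(x − α²(1−β²)))/(x√(h(x)))`. -/
def epssph (α β x : ℝ) : ℝ :=
  (x ^ 2 - 2 * x + α ^ 2 * (1 - β ^ 2) + α * β * Real.sqrt (x - α ^ 2 * (1 - β ^ 2))) /
    (x * Real.sqrt (hfun α β x))

lemma Gfun_continuous (α β : ℝ) : Continuous (Gfun α β) := by
  unfold Gfun hfun
  fun_prop

/-- key algebraic identity: `h(x) − x(x−1) = −2s(s−αβ)` where `s = √(x−c)`. -/
lemma hfun_sub_eq (α β x : ℝ) (hx : α ^ 2 * (1 - β ^ 2) ≤ x) :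
    hfun α β x - x * (x - 1) =
      -(2 * Real.sqrt (x - α ^ 2 * (1 - β ^ 2)) *
        (Real.sqrt (x - α ^ 2 * (1 - β ^ 2)) - α * β)) := by
  have hs2 : Real.sqrt (x - α ^ 2 * (1 - β ^ 2)) ^ 2 = x - α ^ 2 * (1 - β ^ 2) :=
    Real.sq_sqrt (by linarith)
  unfold hfun
  linear_combination 2 * hs2

/-- Derivative of `G`. -/
lemma Gfun_hasDerivAt (α β x : ℝ) (hx : α ^ 2 * (1 - β ^ 2) < x) :
    HasDerivAt (Gfun α β) (3 * (2 * hfun α β x - (x ^ 2 - 2 * x + α ^ 2))) x := by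
  have hxc : 0 < x - α ^ 2 * (1 - β ^ 2) := by linarith
  have hs : 0 < Real.sqrt (x - α ^ 2 * (1 - β ^ 2)) := Real.sqrt_pos.mpr hxc
  have hs2 : Real.sqrt (x - α ^ 2 * (1 - β ^ 2)) ^ 2 = x - α ^ 2 * (1 - β ^ 2) :=
    Real.sq_sqrt hxc.le
  have h1 : HasDerivAt (fun y : ℝ => y - α ^ 2 * (1 - β ^ 2)) 1 x :=
    (hasDerivAt_id x).sub_const _
  have hsq : HasDerivAt (fun y : ℝ => Real.sqrt (y - α ^ 2 * (1 - β ^ 2)))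
      (1 / (2 * Real.sqrt (x - α ^ 2 * (1 - β ^ 2)))) x := h1.sqrt hxc.ne'
  have hh : HasDerivAt (hfun α β)
      (1 * (x - 3) + x * 1 + 2 * α * β * (1 / (2 * Real.sqrt (x - α ^ 2 * (1 - β ^ 2))))) x := by
    have hq : HasDerivAt (fun y : ℝ => y * (y - 3)) (1 * (x - 3) + x * 1) x :=
      (hasDerivAt_id x).mul ((hasDerivAt_id x).sub_const 3)
    exact ((hq.add_const (2 * α ^ 2 * (1 - β ^ 2))).add (hsq.const_mul (2 * α * β)))
  have hcub : HasDerivAt (fun y : ℝ => y * (y ^ 2 - 2 * y + α ^ 2))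
      (1 * (x ^ 2 - 2 * x + α ^ 2) + x * ((2 : ℕ) * x ^ (2 - 1) - 2 * 1)) x := by
    exact (hasDerivAt_id x).mul
      ((((hasDerivAt_pow 2 x)).sub ((hasDerivAt_id x).const_mul 2)).add_const (α ^ 2))
  have hquad : HasDerivAt (fun y : ℝ => hfun α β y - y * (y - 1))
      ((1 * (x - 3) + x * 1 + 2 * α * β * (1 / (2 * Real.sqrt (x - α ^ 2 * (1 - β ^ 2)))))
        - (1 * (x - 1) + x * 1)) x :=
    hh.sub ((hasDerivAt_id x).mul ((hasDerivAt_id x).sub_const 1))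
  have hsqr := hquad.pow 2
  have hG := hcub.sub hsqr
  have : Gfun α β = fun y : ℝ =>
      y * (y ^ 2 - 2 * y + α ^ 2) - (hfun α β y - y * (y - 1)) ^ 2 := rfl
  rw [this]
  convert hG using 1
  case e'_4 => rfl
  case e'_5 => rfl
  case e'_8 => rfl
  unfold hfun
  set s := Real.sqrt (x - α ^ 2 * (1 - β ^ 2)) with hsdef
  have hxe : x = s ^ 2 + α ^ 2 * (1 - β ^ 2) := by linarith
  field_simp
  linear_combination (4 * α * β) * hs2


/-- At any point `x > 1` where `G(x) ≥ 0`, the derivative `3(2h − Δ̄)` is positive. -/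
lemma Gfun_deriv_pos (α β x : ℝ) (hα0 : 0 ≤ α) (hα1 : α < 1)
    (hβ0 : -1 ≤ β) (hβ1 : β ≤ 1) (hx1 : 1 < x)
    (hG : 0 ≤ Gfun α β x) :
    0 < 3 * (2 * hfun α β x - (x ^ 2 - 2 * x + α ^ 2)) := by
  have hα2 : α ^ 2 < 1 := by nlinarith
  have hc : 0 ≤ α ^ 2 * (1 - β ^ 2) := mul_nonneg (sq_nonneg α) (by nlinarith)
  have hc1 : α ^ 2 * (1 - β ^ 2) ≤ α ^ 2 := by nlinarith
  have hxc : α ^ 2 * (1 - β ^ 2) ≤ x := by linarith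
  set s := Real.sqrt (x - α ^ 2 * (1 - β ^ 2)) with hsdef
  have hs2 : s ^ 2 = x - α ^ 2 * (1 - β ^ 2) := Real.sq_sqrt (by linarith)
  set q := 2 * s * (s - α * β) with hqdef
  have hqe : hfun α β x - x * (x - 1) = -q := hfun_sub_eq α β x hxc
  have hGe : Gfun α β x = x * (x ^ 2 - 2 * x + α ^ 2) - q ^ 2 := by
    unfold Gfun; rw [hqe]; ring
  have hGq : q ^ 2 ≤ x * (x ^ 2 - 2 * x + α ^ 2) := by
    rw [hGe] at hG; linarith
  -- key quartic inequality
  have hf : 4 * x * (x ^ 2 - 2 * x + α ^ 2) < (x ^ 2 - α ^ 2) ^ 2 := by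
    nlinarith [sq_nonneg ((x - 1) ^ 2), mul_pos (show (0:ℝ) < 1 - α ^ 2 by linarith)
      (show (0:ℝ) < 2 * x ^ 2 + 4 * x - 1 - α ^ 2 by nlinarith)]
  have hxa : 0 < x ^ 2 - α ^ 2 := by nlinarith
  have h2q : 2 * q < x ^ 2 - α ^ 2 := by
    rcases le_or_gt q 0 with hq0 | hq0
    · linarith
    · by_contra hcon
      push_neg at hcon
      have h1 : (x ^ 2 - α ^ 2) * (x ^ 2 - α ^ 2) ≤ (2 * q) * (2 * q) :=
        mul_le_mul hcon hcon (by linarith) (by linarith)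
      nlinarith
  -- 2h − Δ̄ = x² − α² − 2q
  have hhe : hfun α β x = x * (x - 1) - q := by linarith
  rw [hhe]; nlinarith

/-- `G(xph) < 0`. -/
lemma Gfun_neg_at_ph (α β xph : ℝ) (hα0 : 0 ≤ α) (hα1 : α < 1) (h1 : 1 < xph)
    (hph2 : hfun α β xph = 0) : Gfun α β xph < 0 := by
  have hα2 : α ^ 2 < 1 := by nlinarith
  unfold Gfun
  rw [hph2]
  have h3 : 0 < (xph - 1) ^ 3 := pow_pos (by linarith) 3
  nlinarith [mul_pos (show (0:ℝ) < xph by linarith)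
    (show (0:ℝ) < (xph - 1) ^ 3 + 1 - α ^ 2 by nlinarith)]

/-- `G` is eventually positive: explicit witness. -/
lemma Gfun_pos_at_big (α β b : ℝ) (hα0 : 0 ≤ α) (hα1 : α < 1)
    (hβ0 : -1 ≤ β) (hβ1 : β ≤ 1) (hb : 19 ≤ b) : 0 < Gfun α β b := by
  have hc : 0 ≤ α ^ 2 * (1 - β ^ 2) := mul_nonneg (sq_nonneg α) (by nlinarith)
  have hxc : α ^ 2 * (1 - β ^ 2) ≤ b := by nlinarith
  set s := Real.sqrt (b - α ^ 2 * (1 - β ^ 2)) with hsdef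
  have hs0 : 0 ≤ s := Real.sqrt_nonneg _
  have hs2 : s ^ 2 = b - α ^ 2 * (1 - β ^ 2) := Real.sq_sqrt (by linarith)
  have hqe : hfun α β b - b * (b - 1) = -(2 * s * (s - α * β)) := hfun_sub_eq α β b hxc
  have hGe : Gfun α β b = b * (b ^ 2 - 2 * b + α ^ 2) - (2 * s * (s - α * β)) ^ 2 := by
    unfold Gfun; rw [hqe]; ring
  have hsb : s ≤ b := by nlinarith
  have hab1 : α * β ≤ 1 := by nlinarith
  have hab2 : -1 ≤ α * β := by nlinarith
  have h1 : (s - α * β) ^ 2 ≤ 4 * b := by nlinarith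
  have h2 : s ^ 2 * (s - α * β) ^ 2 ≤ b * (4 * b) :=
    mul_le_mul (by nlinarith) h1 (sq_nonneg _) (by linarith)
  rw [hGe]
  nlinarith

/-- If `f` has positive derivative at `w` and `w < y`, there is a point in
`(w, y]` where `f` exceeds `f w`. -/
lemma exists_gt_right {f : ℝ → ℝ} {d w y : ℝ} (hd : HasDerivAt f d w) (hd0 : 0 < d)
    (hwy : w < y) : ∃ z, z ∈ Ioc w y ∧ f w < f z := by
  have hslope := hasDerivAt_iff_tendsto_slope.mp hd
  have hev : ∀ᶠ z in 𝓝[≠] w, 0 < slope f w z := hslope.eventually (eventually_gt_nhds hd0)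
  have hmono : 𝓝[>] w ≤ 𝓝[≠] w := nhdsWithin_mono _ fun z hz => ne_of_gt hz
  have hev' : ∀ᶠ z in 𝓝[>] w, 0 < slope f w z := hev.filter_mono hmono
  have hIoc : Ioc w y ∈ 𝓝[>] w := Ioc_mem_nhdsGT hwy
  obtain ⟨z, hz1, hz2⟩ := (hev'.and (eventually_of_mem hIoc fun z hz => hz)).exists
  refine ⟨z, hz2, ?_⟩
  rw [slope_def_field] at hz1
  rcases div_pos_iff.mp hz1 with ⟨h1, _⟩ | ⟨_, h2⟩
  · linarith
  · have := hz2.1; linarith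

/-- If `f` has positive derivative at `y` and `x < y`, there is a point in
`[x, y)` where `f` is below `f y`. -/
lemma exists_lt_left {f : ℝ → ℝ} {d x y : ℝ} (hd : HasDerivAt f d y) (hd0 : 0 < d)
    (hxy : x < y) : ∃ z, z ∈ Ico x y ∧ f z < f y := by
  have hslope := hasDerivAt_iff_tendsto_slope.mp hd
  have hev : ∀ᶠ z in 𝓝[≠] y, 0 < slope f y z := hslope.eventually (eventually_gt_nhds hd0)
  have hmono : 𝓝[<] y ≤ 𝓝[≠] y := nhdsWithin_mono _ fun z hz => ne_of_lt hz
  have hev' : ∀ᶠ z in 𝓝[<] y, 0 < slope f y z := hev.filter_mono hmono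
  have hIco : Ico x y ∈ 𝓝[<] y := Ico_mem_nhdsLT hxy
  obtain ⟨z, hz1, hz2⟩ := (hev'.and (eventually_of_mem hIco fun z hz => hz)).exists
  refine ⟨z, hz2, ?_⟩
  rw [slope_def_field] at hz1
  rcases div_pos_iff.mp hz1 with ⟨_, h2⟩ | ⟨h1, _⟩
  · have := hz2.2; linarith
  · linarith

/-- The function `G` has exactly one zero `x_{ms}` in `(x_{ph}, ∞)`; it is
strictly negative on `[x_{ph}, x_{ms})` and strictly positive on `(x_{ms}, ∞)`.
Here `x_{ph}` is the unique zero of `h` in `(x₊, ∞)`. -/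
theorem Gfun_unique_zero (α β : ℝ) (hα0 : 0 ≤ α) (hα1 : α < 1)
    (hβ0 : -1 ≤ β) (hβ1 : β ≤ 1)
    (xph : ℝ)
    (hph1 : 1 + Real.sqrt (1 - α ^ 2) < xph) (hph2 : hfun α β xph = 0)
    (hph3 : ∀ x : ℝ, 1 + Real.sqrt (1 - α ^ 2) < x → x < xph → hfun α β x < 0)
    (hph4 : ∀ x : ℝ, xph < x → 0 < hfun α β x) :
    ∃ xms : ℝ, xph < xms ∧ Gfun α β xms = 0 ∧
      (∀ x : ℝ, xph ≤ x → x < xms → Gfun α β x < 0) ∧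
      (∀ x : ℝ, xms < x → 0 < Gfun α β x) := by
  have hβsq : β ^ 2 ≤ 1 := by nlinarith
  have hα2 : α ^ 2 < 1 := by nlinarith
  have hsq0 : 0 ≤ Real.sqrt (1 - α ^ 2) := Real.sqrt_nonneg _
  have hxph1 : 1 < xph := by linarith
  have hc1 : α ^ 2 * (1 - β ^ 2) < 1 := by nlinarith [sq_nonneg α, sq_nonneg β, sq_nonneg (α*β)]
  set g := Gfun α β with hgdef
  have hGcont : Continuous g := Gfun_continuous α β
  have hGxph : g xph < 0 := Gfun_neg_at_ph α β xph hα0 hα1 hxph1 hph2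
  set b := max (xph + 1) 19 with hbdef
  have hb19 : (19:ℝ) ≤ b := le_max_right _ _
  have hbxph : xph < b := lt_of_lt_of_le (by linarith) (le_max_left _ _)
  have hbG : 0 < g b := Gfun_pos_at_big α β b hα0 hα1 hβ0 hβ1 hb19
  set A := Ici xph ∩ {x : ℝ | 0 ≤ g x} with hAdef
  have hA_closed : IsClosed A := isClosed_Ici.inter (isClosed_le continuous_const hGcont)
  have hA_ne : A.Nonempty := ⟨b, le_of_lt hbxph, hbG.le⟩
  have hA_bdd : BddBelow A := ⟨xph, fun x hx => hx.1⟩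
  set xms := sInf A with hxmsdef
  have hmem : xms ∈ A := hA_closed.csInf_mem hA_ne hA_bdd
  have hms_ge : xph ≤ xms := hmem.1
  have hms_nn : 0 ≤ g xms := hmem.2
  have hms_gt : xph < xms := by
    rcases lt_or_eq_of_le hms_ge with h | h
    · exact h
    · exfalso; rw [← h] at hms_nn; linarith
  -- derivative positivity at points with g ≥ 0
  have key : ∀ w : ℝ, xph < w → 0 ≤ g w →
      HasDerivAt g (3 * (2 * hfun α β w - (w ^ 2 - 2 * w + α ^ 2))) w ∧
      0 < 3 * (2 * hfun α β w - (w ^ 2 - 2 * w + α ^ 2)) := by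
    intro w hw hgw
    have hw1 : 1 < w := by linarith
    exact ⟨Gfun_hasDerivAt α β w (by linarith), Gfun_deriv_pos α β w hα0 hα1 hβ0 hβ1 hw1 hgw⟩
  -- g is nonnegative on [xms, ∞)
  have hBnn : ∀ y : ℝ, xms ≤ y → 0 ≤ g y := by
    intro y hy
    rcases eq_or_lt_of_le hy with rfl | hy'
    · exact hms_nn
    · by_contra hneg
      push_neg at hneg
      set K := Icc xms y ∩ {z : ℝ | 0 ≤ g z} with hKdef
      have hK_closed : IsClosed K := isClosed_Icc.inter (isClosed_le continuous_const hGcont)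
      have hK_ne : K.Nonempty := ⟨xms, ⟨le_rfl, hy⟩, hms_nn⟩
      have hK_bdd : BddAbove K := ⟨y, fun z hz => hz.1.2⟩
      set w := sSup K with hwdef
      have hw_mem : w ∈ K := hK_closed.csSup_mem hK_ne hK_bdd
      have hwy : w < y := by
        rcases lt_or_eq_of_le hw_mem.1.2 with h | h
        · exact h
        · exfalso; have := hw_mem.2; rw [h] at this; exact absurd this (not_le.mpr hneg)
      obtain ⟨hd, hd0⟩ := key w (lt_of_lt_of_le hms_gt hw_mem.1.1) hw_mem.2
      obtain ⟨z, hz_mem, hz_gt⟩ := exists_gt_right hd hd0 hwy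
      have hzK : z ∈ K := ⟨⟨le_trans hw_mem.1.1 hz_mem.1.le, hz_mem.2⟩,
        le_of_lt (lt_of_le_of_lt hw_mem.2 hz_gt)⟩
      have := le_csSup hK_bdd hzK
      exact absurd this (not_le.mpr hz_mem.1)
  -- g is strictly positive on (xms, ∞)
  have hBpos : ∀ y : ℝ, xms < y → 0 < g y := by
    intro y hy
    rcases lt_or_eq_of_le (hBnn y hy.le) with h | h
    · exact h
    · exfalso
      obtain ⟨hd, hd0⟩ := key y (lt_trans hms_gt hy) h.le
      obtain ⟨z, hz_mem, hz_lt⟩ := exists_lt_left hd hd0 hy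
      have := hBnn z hz_mem.1
      rw [← h] at hz_lt
      linarith
  -- g xms = 0
  have hms0 : g xms = 0 := by
    rcases lt_or_eq_of_le hms_nn with h | h
    · exfalso
      have hev : ∀ᶠ z in 𝓝 xms, 0 < g z :=
        hGcont.continuousAt.eventually (eventually_gt_nhds h)
      have hev' : ∀ᶠ z in 𝓝[<] xms, 0 < g z := hev.filter_mono nhdsWithin_le_nhds
      have hIoo : Ioo xph xms ∈ 𝓝[<] xms := Ioo_mem_nhdsLT hms_gt
      obtain ⟨z, hz1, hz2⟩ := (hev'.and (eventually_of_mem hIoo fun z hz => hz)).exists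
      have hzA : z ∈ A := ⟨hz2.1.le, hz1.le⟩
      have := csInf_le hA_bdd hzA
      exact absurd this (not_le.mpr hz2.2)
    · exact h.symm
  refine ⟨xms, hms_gt, hms0, ?_, hBpos⟩
  intro x hx1 hx2
  by_contra hcon
  push_neg at hcon
  have hxA : x ∈ A := ⟨hx1, hcon⟩
  exact absurd (csInf_le hA_bdd hxA) (not_le.mpr hx2)

end
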